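/- Let N ≥ 1, let I_1, …, I_N be pairwise disjoint nondegenerate closed intervals contained in [-π/8, π/8], and let A_1, …, A_N > 0. Define h = Σ_{i=1}^N A_i·1_{I_i} and H : ℝ → ℝ by H(θ) = ∫_{-π/8}^{π/8} |sin(2(θ - θ'))| h(θ') dθ'. If H takes the same value at all 2N endpoints of the intervals I_1, …, I_N, then N = 1. -/

import Mathlib

open Real MeasureTheory intervalIntegral


lemma integral_sin_shift (x p q : ℝ) :
    ∫ t in p..q, Real.sin (2*(t - x)) = (Real.cos (2*(p - x)) - Real.cos (2*(q - x))) / 2 := by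
  have key : ∀ t : ℝ, HasDerivAt (fun s : ℝ => -Real.cos (2*(s - x)) / 2)
      (Real.sin (2*(t - x))) t := by
    intro t
    have h1 : HasDerivAt (fun s : ℝ => 2*(s - x)) 2 t := by
      simpa using ((hasDerivAt_id t).sub_const x).const_mul 2
    have h2 := (Real.hasDerivAt_cos (2*(t - x))).comp t h1
    have h3 := (h2.neg).div_const 2
    convert h3 using 1
    · rfl
    · rfl
    · rfl
    · ring
  rw [intervalIntegral.integral_eq_sub_of_hasDerivAt (fun t _ => key t)
    ((Real.continuous_sin.comp (by continuity)).intervalIntegrable p q)]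
  ring

lemma abs_sin_integral_left (x p q : ℝ) (hxp : x ≤ p) (hpq : p ≤ q) (hb : q - x ≤ π/2) :
    ∫ t in p..q, |Real.sin (2*(x - t))| = (Real.cos (2*(x - p)) - Real.cos (2*(x - q))) / 2 := by
  have heq : ∫ t in p..q, |Real.sin (2*(x - t))| = ∫ t in p..q, Real.sin (2*(t - x)) := by
    apply intervalIntegral.integral_congr
    intro t ht
    rw [Set.uIcc_of_le hpq] at ht
    have h1 : 0 ≤ 2*(t - x) := by nlinarith [ht.1]
    have h2 : 2*(t - x) ≤ π := by nlinarith [ht.2, Real.pi_pos]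
    have h3 : Real.sin (2*(x - t)) = -Real.sin (2*(t - x)) := by
      rw [show 2*(x-t) = -(2*(t-x)) by ring, Real.sin_neg]
    show |Real.sin (2*(x - t))| = Real.sin (2*(t - x))
    rw [h3, abs_neg, abs_of_nonneg (Real.sin_nonneg_of_nonneg_of_le_pi h1 h2)]
  rw [heq, integral_sin_shift]
  rw [show 2*(p - x) = -(2*(x-p)) by ring, show 2*(q - x) = -(2*(x-q)) by ring,
    Real.cos_neg, Real.cos_neg]

lemma abs_sin_integral_right (x p q : ℝ) (hqx : q ≤ x) (hpq : p ≤ q) (hb : x - p ≤ π/2) :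
    ∫ t in p..q, |Real.sin (2*(x - t))| = (Real.cos (2*(x - q)) - Real.cos (2*(x - p))) / 2 := by
  have heq : ∫ t in p..q, |Real.sin (2*(x - t))| = ∫ t in p..q, -Real.sin (2*(t - x)) := by
    apply intervalIntegral.integral_congr
    intro t ht
    rw [Set.uIcc_of_le hpq] at ht
    have h1 : 0 ≤ 2*(x - t) := by nlinarith [ht.2]
    have h2 : 2*(x - t) ≤ π := by nlinarith [ht.1, Real.pi_pos]
    show |Real.sin (2*(x - t))| = -Real.sin (2*(t - x))
    rw [show (2:ℝ)*(t-x) = -(2*(x-t)) by ring, Real.sin_neg, neg_neg,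
      abs_of_nonneg (Real.sin_nonneg_of_nonneg_of_le_pi h1 h2)]
  rw [heq, intervalIntegral.integral_neg, integral_sin_shift]
  rw [show 2*(p - x) = -(2*(x-p)) by ring, show 2*(q - x) = -(2*(x-q)) by ring,
    Real.cos_neg, Real.cos_neg]
  ring

lemma indicator_intervalIntegrable (f : ℝ → ℝ) (hf : Continuous f) (p q l u : ℝ) :
    IntervalIntegrable (Set.indicator (Set.Icc p q) f) volume l u := by
  rw [intervalIntegrable_iff]
  exact MeasureTheory.Integrable.indicator (intervalIntegrable_iff.mp (hf.intervalIntegrable l u))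
    measurableSet_Icc

lemma integral_indicator_collapse (f : ℝ → ℝ) (hf : Continuous f) (l u p q : ℝ)
    (h1 : l ≤ p) (h2 : p ≤ q) (h3 : q ≤ u) :
    ∫ t in l..u, Set.indicator (Set.Icc p q) f t = ∫ t in p..q, f t := by
  have hi : ∀ c d : ℝ, IntervalIntegrable (Set.indicator (Set.Icc p q) f) volume c d :=
    fun c d => indicator_intervalIntegrable f hf p q c d
  have z1 : ∫ t in l..p, Set.indicator (Set.Icc p q) f t = 0 := by
    have hae : ∀ᵐ t ∂(volume : Measure ℝ), t ∈ Set.uIoc l p → Set.indicator (Set.Icc p q) f t = 0 := by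
      rw [MeasureTheory.ae_iff]
      refine measure_mono_null ?_ (Real.volume_singleton (a := p))
      intro t ht
      simp only [Set.mem_setOf_eq, Classical.not_imp] at ht
      obtain ⟨ht1, ht2⟩ := ht
      have hmem : t ∈ Set.Icc p q := by
        by_contra hmem
        exact ht2 (Set.indicator_of_notMem hmem f)
      rw [Set.uIoc_of_le h1] at ht1
      have : t = p := le_antisymm ht1.2 hmem.1
      simp [this]
    rw [intervalIntegral.integral_congr_ae (g := fun _ => (0:ℝ)) hae, intervalIntegral.integral_zero]
  have z2 : ∫ t in q..u, Set.indicator (Set.Icc p q) f t = 0 := by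
    have hae : ∀ᵐ t ∂(volume : Measure ℝ), t ∈ Set.uIoc q u → Set.indicator (Set.Icc p q) f t = 0 := by
      rw [MeasureTheory.ae_iff]
      refine measure_mono_null ?_ (Real.volume_singleton (a := q))
      intro t ht
      simp only [Set.mem_setOf_eq, Classical.not_imp] at ht
      obtain ⟨ht1, ht2⟩ := ht
      have hmem : t ∈ Set.Icc p q := by
        by_contra hmem
        exact ht2 (Set.indicator_of_notMem hmem f)
      rw [Set.uIoc_of_le h3] at ht1
      have : t = q := le_antisymm hmem.2 ht1.1.le
      simp [this]
    rw [intervalIntegral.integral_congr_ae (g := fun _ => (0:ℝ)) hae, intervalIntegral.integral_zero]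
  have mid : ∫ t in p..q, Set.indicator (Set.Icc p q) f t = ∫ t in p..q, f t := by
    apply intervalIntegral.integral_congr
    intro t ht
    rw [Set.uIcc_of_le h2] at ht
    exact Set.indicator_of_mem ht f
  have split1 := intervalIntegral.integral_add_adjacent_intervals (hi l p) (hi p u)
  have split2 := intervalIntegral.integral_add_adjacent_intervals (hi p q) (hi q u)
  rw [← split1, ← split2, z1, z2, mid]
  ring

lemma flip_piece (Pv Qv d x y : ℝ) (hxy : x < y) (hy : y - x < π/2)
    (h1 : Pv * Real.cos (2*x) + Qv * Real.sin (2*x) = d)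
    (h2 : Pv * Real.cos (2*y) + Qv * Real.sin (2*y) = d) :
    (Qv * Real.cos (2*y) - Pv * Real.sin (2*y) = -(Qv * Real.cos (2*x) - Pv * Real.sin (2*x)))
    ∧ (Qv * Real.cos (2*x) - Pv * Real.sin (2*x)) * Real.cos (y - x) = d * Real.sin (y - x) := by
  have hcos : Real.cos (2*y) = Real.cos (2*x) * Real.cos (2*(y-x)) - Real.sin (2*x) * Real.sin (2*(y-x)) := by
    rw [show 2*y = 2*x + 2*(y-x) by ring, Real.cos_add]
  have hsin : Real.sin (2*y) = Real.sin (2*x) * Real.cos (2*(y-x)) + Real.cos (2*x) * Real.sin (2*(y-x)) := by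
    rw [show 2*y = 2*x + 2*(y-x) by ring, Real.sin_add]
  have hS : 0 < Real.sin (2*(y-x)) :=
    Real.sin_pos_of_pos_of_lt_pi (by linarith) (by linarith [Real.pi_pos])
  have pyth2 := Real.sin_sq_add_cos_sq (2*(y-x))
  have key : (Qv * Real.cos (2*x) - Pv * Real.sin (2*x)) * Real.sin (2*(y-x))
      = d * (1 - Real.cos (2*(y-x))) := by
    rw [hcos, hsin] at h2
    linear_combination h2 - Real.cos (2*(y-x)) * h1
  constructor
  · rw [hcos, hsin]
    have hfin : ((Qv * Real.cos (2*x) - Pv * Real.sin (2*x)) * Real.cos (2*(y-x))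
        - d * Real.sin (2*(y-x)) + (Qv * Real.cos (2*x) - Pv * Real.sin (2*x)))
        * Real.sin (2*(y-x)) = 0 := by
      linear_combination (Real.cos (2*(y-x)) + 1) * key - d * pyth2
    have := mul_eq_zero.mp hfin
    rcases this with h0 | h0
    · linear_combination h0 - Real.sin (2*(y-x)) * h1
    · exact absurd h0 (ne_of_gt hS)
  · have hsL : 0 < Real.sin (y - x) :=
      Real.sin_pos_of_pos_of_lt_pi (by linarith) (by linarith [Real.pi_pos])
    have h2m : Real.sin (2*(y-x)) = 2 * Real.sin (y-x) * Real.cos (y-x) := by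
      rw [show 2*(y-x) = 2*(y-x) by ring]
      exact Real.sin_two_mul (y-x)
    have c2m : Real.cos (2*(y-x)) = 2 * Real.cos (y-x) ^ 2 - 1 := Real.cos_two_mul (y-x)
    have pyth1 := Real.sin_sq_add_cos_sq (y-x)
    have hfin : ((Qv * Real.cos (2*x) - Pv * Real.sin (2*x)) * Real.cos (y-x)
        - d * Real.sin (y-x)) * (2 * Real.sin (y-x)) = 0 := by
      rw [h2m, c2m] at key
      linear_combination key - 2 * d * pyth1
    rcases mul_eq_zero.mp hfin with h0 | h0
    · linarith
    · linarith

lemma H_eval (N : ℕ) (a b A : Fin N → ℝ)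
    (hab : ∀ i, a i < b i)
    (hsub : ∀ i, Set.Icc (a i) (b i) ⊆ Set.Icc (-(π / 8)) (π / 8))
    (h : ℝ → ℝ)
    (hdef : ∀ x : ℝ, h x = ∑ i : Fin N,
      A i * Set.indicator (Set.Icc (a i) (b i)) (fun _ => (1 : ℝ)) x)
    (H : ℝ → ℝ)
    (hH : ∀ θ : ℝ, H θ =
      ∫ θ' in (-(π / 8))..(π / 8), |Real.sin (2 * (θ - θ'))| * h θ')
    (x : ℝ) (hx1 : -(π/8) ≤ x) (hx2 : x ≤ π/8)
    (hside : ∀ i, x ≤ a i ∨ b i ≤ x) :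
    H x = ∑ i : Fin N, (if b i ≤ x then (1:ℝ) else -1) * (A i / 2)
      * (Real.cos (2*(x - b i)) - Real.cos (2*(x - a i))) := by
  have hbounds : ∀ i, -(π/8) ≤ a i ∧ b i ≤ π/8 := by
    intro i
    exact ⟨(hsub i ⟨le_refl _, (hab i).le⟩).1, (hsub i ⟨(hab i).le, le_refl _⟩).2⟩
  rw [hH]
  have hfun : (fun θ' => |Real.sin (2 * (x - θ'))| * h θ')
      = fun θ' => ∑ i : Fin N,
        Set.indicator (Set.Icc (a i) (b i)) (fun t => A i * |Real.sin (2*(x - t))|) θ' := by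
    funext t
    show |Real.sin (2 * (x - t))| * h t = _
    rw [hdef t, Finset.mul_sum]
    apply Finset.sum_congr rfl
    intro i _
    by_cases ht : t ∈ Set.Icc (a i) (b i)
    · rw [Set.indicator_of_mem ht, Set.indicator_of_mem ht]; ring
    · rw [Set.indicator_of_notMem ht, Set.indicator_of_notMem ht]; ring
  rw [hfun]
  have hcont : ∀ i : Fin N, Continuous (fun t => A i * |Real.sin (2*(x - t))|) := by
    intro i
    exact continuous_const.mul ((Real.continuous_sin.comp (by continuity)).abs)
  rw [intervalIntegral.integral_finset_sum]
  · apply Finset.sum_congr rfl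
    intro i _
    rw [integral_indicator_collapse _ (hcont i) _ _ _ _ (hbounds i).1 (hab i).le (hbounds i).2]
    rw [intervalIntegral.integral_const_mul]
    rcases hside i with hl | hr
    · rw [if_neg (by linarith [hab i] : ¬ b i ≤ x)]
      rw [abs_sin_integral_left x (a i) (b i) hl (hab i).le
        (by linarith [(hbounds i).2, Real.pi_pos] : b i - x ≤ π/2)]
      ring
    · rw [if_pos hr]
      rw [abs_sin_integral_right x (a i) (b i) hr (hab i).le
        (by linarith [(hbounds i).1, Real.pi_pos] : x - a i ≤ π/2)]
      ring
  · intro i _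
    exact indicator_intervalIntegrable _ (hcont i) _ _ _ _

/-- weighted classification of rotating sector patches supported in an
angular interval of length `π/4`: with `h = Σ A_i · 1_{I_i}` and
`H(θ) = ∫_{-π/8}^{π/8} |sin(2(θ-θ'))| h(θ') dθ'`, if `H` takes the same value at all
`2N` endpoints, then `N = 1`. -/
theorem rotating_sector_classification_weighted
    (N : ℕ) (hN : 1 ≤ N) (a b : Fin N → ℝ) (A : Fin N → ℝ)
    (hA : ∀ i, 0 < A i)
    (hab : ∀ i, a i < b i)
    (hsub : ∀ i, Set.Icc (a i) (b i) ⊆ Set.Icc (-(π / 8)) (π / 8))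
    (hdisj : Pairwise (Function.onFun Disjoint fun i => Set.Icc (a i) (b i)))
    (h : ℝ → ℝ)
    (hdef : ∀ x : ℝ, h x = ∑ i : Fin N,
      A i * Set.indicator (Set.Icc (a i) (b i)) (fun _ => (1 : ℝ)) x)
    (H : ℝ → ℝ)
    (hH : ∀ θ : ℝ, H θ =
      ∫ θ' in (-(π / 8))..(π / 8), |Real.sin (2 * (θ - θ'))| * h θ')
    (c : ℝ) (hc : ∀ i, H (a i) = c ∧ H (b i) = c) :
    N = 1 := by
  by_contra hN1
  have hN2 : 2 ≤ N := by omega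
  set σ := Tuple.sort a with hσdef
  set α : Fin N → ℝ := a ∘ σ with hα
  set β : Fin N → ℝ := b ∘ σ with hβ
  set W : Fin N → ℝ := A ∘ σ with hW
  have hmono : Monotone α := Tuple.monotone_sort a
  have habs : ∀ j, α j < β j := fun j => hab (σ j)
  have hWpos : ∀ j, 0 < W j := fun j => hA (σ j)
  have hKO : ∀ i j : Fin N, i < j → β i < α j := by
    intro i j hij
    by_contra hcon
    push_neg at hcon
    have hσne : σ i ≠ σ j := fun hEq => (ne_of_lt hij) (σ.injective hEq)
    have hd := hdisj hσne
    have m1 : α j ∈ Set.Icc (a (σ i)) (b (σ i)) := ⟨hmono hij.le, hcon⟩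
    have m2 : α j ∈ Set.Icc (a (σ j)) (b (σ j)) := ⟨le_refl _, (habs j).le⟩
    exact (Set.disjoint_left.mp hd m1) m2
  have hbnd : ∀ j, -(π/8) ≤ α j ∧ β j ≤ π/8 := fun j =>
    ⟨(hsub (σ j) ⟨le_refl _, (habs j).le⟩).1, (hsub (σ j) ⟨(habs j).le, le_refl _⟩).2⟩
  have hcs : ∀ j, H (α j) = c ∧ H (β j) = c := fun j => hc (σ j)
  -- piece coefficient sums
  set P : ℕ → ℝ := fun k => ∑ i : Fin N, (if (i:ℕ) < k then (1:ℝ) else -1) * (W i / 2)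
    * (Real.cos (2*β i) - Real.cos (2*α i)) with hP
  set Q : ℕ → ℝ := fun k => ∑ i : Fin N, (if (i:ℕ) < k then (1:ℝ) else -1) * (W i / 2)
    * (Real.sin (2*β i) - Real.sin (2*α i)) with hQ
  have SUMEXP : ∀ (x : ℝ) (k : ℕ),
      (∑ i : Fin N, (if (i:ℕ) < k then (1:ℝ) else -1) * (W i / 2)
        * (Real.cos (2*(x - β i)) - Real.cos (2*(x - α i))))
      = P k * Real.cos (2*x) + Q k * Real.sin (2*x) := by
    intro x k
    rw [hP, hQ]
    simp only []
    rw [Finset.sum_mul, Finset.sum_mul, ← Finset.sum_add_distrib]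
    apply Finset.sum_congr rfl
    intro i _
    rw [show 2*(x - β i) = 2*x - 2*β i by ring, show 2*(x - α i) = 2*x - 2*α i by ring,
      Real.cos_sub, Real.cos_sub]
    ring
  -- evaluation of H at sorted points
  have EVAL : ∀ (x : ℝ), -(π/8) ≤ x → x ≤ π/8 → (∀ i, x ≤ a i ∨ b i ≤ x) →
      H x = ∑ i : Fin N, (if β i ≤ x then (1:ℝ) else -1) * (W i / 2)
        * (Real.cos (2*(x - β i)) - Real.cos (2*(x - α i))) := by
    intro x hx1 hx2 hside
    rw [H_eval N a b A hab hsub h hdef H hH x hx1 hx2 hside]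
    rw [← Equiv.sum_comp σ (fun i => (if b i ≤ x then (1:ℝ) else -1) * (A i / 2)
      * (Real.cos (2*(x - b i)) - Real.cos (2*(x - a i))))]
    apply Finset.sum_congr rfl
    intro i _
    simp only [hα, hβ, hW, Function.comp_apply]
  have EE : ∀ (x : ℝ), -(π/8) ≤ x → x ≤ π/8 → ∀ k : ℕ,
      (∀ i : Fin N, ((i:ℕ) < k → β i ≤ x) ∧ (¬((i:ℕ) < k) → x ≤ α i)) →
      H x = P k * Real.cos (2*x) + Q k * Real.sin (2*x) := by
    intro x hx1 hx2 k hcond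
    have hs : ∀ i0, x ≤ a i0 ∨ b i0 ≤ x := by
      intro i0
      obtain ⟨i, rfl⟩ := σ.surjective i0
      by_cases hik : (i:ℕ) < k
      · right; exact (hcond i).1 hik
      · left; exact (hcond i).2 hik
    rw [EVAL x hx1 hx2 hs, ← SUMEXP x k]
    apply Finset.sum_congr rfl
    intro i _
    have hiff : (β i ≤ x) ↔ ((i:ℕ) < k) := by
      constructor
      · intro hle
        by_contra hik
        have := (hcond i).2 hik
        linarith [habs i]
      · exact (hcond i).1
    simp only [hiff]
  have EAc : ∀ j : Fin N, P (j:ℕ) * Real.cos (2*α j) + Q (j:ℕ) * Real.sin (2*α j) = c := by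
    intro j
    rw [← EE (α j) (hbnd j).1 (le_trans (habs j).le (hbnd j).2) (j:ℕ) ?_]
    · exact (hcs j).1
    · intro i
      constructor
      · intro hik
        exact (hKO i j (by rwa [Fin.lt_def])).le
      · intro hik
        exact hmono (by rw [Fin.le_def]; omega)
  have EBc : ∀ j : Fin N, P ((j:ℕ)+1) * Real.cos (2*β j) + Q ((j:ℕ)+1) * Real.sin (2*β j) = c := by
    intro j
    rw [← EE (β j) (le_trans (hbnd j).1 (habs j).le) (hbnd j).2 ((j:ℕ)+1) ?_]
    · exact (hcs j).2
    · intro i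
      constructor
      · intro hik
        rcases eq_or_lt_of_le (show (i:ℕ) ≤ (j:ℕ) by omega) with hEq | hlt
        · exact le_of_eq (congrArg β (Fin.ext hEq))
        · exact le_of_lt (lt_trans (hKO i j (by rwa [Fin.lt_def])) (habs j))
      · intro hik
        exact (hKO j i (by rw [Fin.lt_def]; omega)).le
  -- step relations for P, Q
  have PS : ∀ j : Fin N, P ((j:ℕ)+1) = P (j:ℕ) + W j * (Real.cos (2*β j) - Real.cos (2*α j)) := by
    intro j
    have hsub' : P ((j:ℕ)+1) - P (j:ℕ) = W j * (Real.cos (2*β j) - Real.cos (2*α j)) := by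
      rw [hP]
      simp only []
      rw [← Finset.sum_sub_distrib]
      rw [Finset.sum_eq_single j]
      · rw [if_pos (Nat.lt_succ_self _), if_neg (lt_irrefl _)]
        ring
      · intro i _ hne
        have hvne : (i:ℕ) ≠ (j:ℕ) := fun hEq => hne (Fin.ext hEq)
        by_cases hik : (i:ℕ) < (j:ℕ)
        · rw [if_pos hik, if_pos (by omega)]; ring
        · rw [if_neg hik, if_neg (by omega)]; ring
      · intro habs'
        exact absurd (Finset.mem_univ j) habs'
    linarith
  have QS : ∀ j : Fin N, Q ((j:ℕ)+1) = Q (j:ℕ) + W j * (Real.sin (2*β j) - Real.sin (2*α j)) := by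
    intro j
    have hsub' : Q ((j:ℕ)+1) - Q (j:ℕ) = W j * (Real.sin (2*β j) - Real.sin (2*α j)) := by
      rw [hQ]
      simp only []
      rw [← Finset.sum_sub_distrib]
      rw [Finset.sum_eq_single j]
      · rw [if_pos (Nat.lt_succ_self _), if_neg (lt_irrefl _)]
        ring
      · intro i _ hne
        have hvne : (i:ℕ) ≠ (j:ℕ) := fun hEq => hne (Fin.ext hEq)
        by_cases hik : (i:ℕ) < (j:ℕ)
        · rw [if_pos hik, if_pos (by omega)]; ring
        · rw [if_neg hik, if_neg (by omega)]; ring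
      · intro habs'
        exact absurd (Finset.mem_univ j) habs'
    linarith
  have PN0 : P 0 = -(P N) ∧ Q 0 = -(Q N) := by
    constructor
    · rw [hP]
      simp only []
      rw [← Finset.sum_neg_distrib]
      apply Finset.sum_congr rfl
      intro i _
      rw [if_neg (Nat.not_lt_zero _), if_pos i.isLt]
      ring
    · rw [hQ]
      simp only []
      rw [← Finset.sum_neg_distrib]
      apply Finset.sum_congr rfl
      intro i _
      rw [if_neg (Nat.not_lt_zero _), if_pos i.isLt]
      ring
  -- special indices
  have h0N : 0 < N := by omega
  have h1N : 1 < N := by omega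
  set j0 : Fin N := ⟨0, h0N⟩ with hj0
  set j1 : Fin N := ⟨1, h1N⟩ with hj1
  set jN : Fin N := ⟨N-1, by omega⟩ with hjN
  have EW : P N * Real.cos (2*(α j0 + π/2)) + Q N * Real.sin (2*(α j0 + π/2)) = c := by
    rw [show 2*(α j0 + π/2) = 2*α j0 + π by ring, Real.cos_add_pi, Real.sin_add_pi]
    have h0 := EAc j0
    rw [show ((j0:ℕ):ℕ) = 0 from rfl] at h0
    rw [PN0.1, PN0.2] at h0
    linarith
  -- c > 0
  have hcpos : 0 < c := by
    have hs : ∀ i0, α j0 ≤ a i0 ∨ b i0 ≤ α j0 := by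
      intro i0
      obtain ⟨i, rfl⟩ := σ.surjective i0
      left
      exact hmono (by rw [Fin.le_def]; exact Nat.zero_le _)
    have hev := EVAL (α j0) (hbnd j0).1 (le_trans (habs j0).le (hbnd j0).2) hs
    rw [(hcs j0).1] at hev
    rw [hev]
    apply Finset.sum_pos
    · intro i _
      have hcond : ¬ (β i ≤ α j0) := by
        push_neg
        exact lt_of_le_of_lt (hmono (by rw [Fin.le_def]; exact Nat.zero_le _)) (habs i)
      rw [if_neg hcond]
      have harg1 : Real.cos (2*(α j0 - α i)) = Real.cos (2*(α i - α j0)) := by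
        rw [show 2*(α j0 - α i) = -(2*(α i - α j0)) by ring, Real.cos_neg]
      have harg2 : Real.cos (2*(α j0 - β i)) = Real.cos (2*(β i - α j0)) := by
        rw [show 2*(α j0 - β i) = -(2*(β i - α j0)) by ring, Real.cos_neg]
      have hlt : Real.cos (2*(β i - α j0)) < Real.cos (2*(α i - α j0)) := by
        apply Real.cos_lt_cos_of_nonneg_of_le_pi
        · have : α j0 ≤ α i := hmono (by rw [Fin.le_def]; exact Nat.zero_le _)
          linarith
        · have h1 := (hbnd i).2
          have h2 := (hbnd j0).1
          linarith [Real.pi_pos]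
        · linarith [habs i]
      have hW2 : 0 < W i / 2 := by linarith [hWpos i]
      nlinarith [hlt, hW2, harg1, harg2]
    · exact ⟨j0, Finset.mem_univ j0⟩
  -- the alternating chain
  set tq : Fin N → ℝ := fun j => Q ((j:ℕ)+1) * Real.cos (2*β j) - P ((j:ℕ)+1) * Real.sin (2*β j)
    with htq
  have STEP : ∀ (m : ℕ) (hm : m+1 < N), tq ⟨m+1, hm⟩ = tq ⟨m, by omega⟩ := by
    intro m hm
    set ja : Fin N := ⟨m, by omega⟩ with hja
    set jb : Fin N := ⟨m+1, hm⟩ with hjb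
    have hja1 : ((ja:ℕ)+1) = m+1 := rfl
    have hjb1 : ((jb:ℕ)) = m+1 := rfl
    -- gap piece between β ja and α jb
    have hgap := flip_piece (P (m+1)) (Q (m+1)) c (β ja) (α jb)
      (hKO ja jb (by rw [Fin.lt_def]; omega))
      (by
        have h1 := (hbnd jb).2
        have h2 := (hbnd ja).1
        have h3 := habs jb
        have h4 := habs ja
        linarith [Real.pi_pos])
      (by rw [← hja1]; exact EBc ja)
      (by rw [← hjb1]; exact EAc jb)
    obtain ⟨hg1, _⟩ := hgap
    -- interval piece on [α jb, β jb]
    have pyA := Real.sin_sq_add_cos_sq (2*α jb)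
    have pyB := Real.sin_sq_add_cos_sq (2*β jb)
    have hEAjb := EAc jb
    have hEBjb := EBc jb
    have hPSjb := PS jb
    have hQSjb := QS jb
    rw [hjb1] at hEAjb hEBjb hPSjb hQSjb
    have hI1 : (P (m+1) - W jb * Real.cos (2*α jb)) * Real.cos (2*α jb)
        + (Q (m+1) - W jb * Real.sin (2*α jb)) * Real.sin (2*α jb) = c - W jb := by
      linear_combination hEAjb - W jb * pyA
    have hI2 : (P (m+1) - W jb * Real.cos (2*α jb)) * Real.cos (2*β jb)
        + (Q (m+1) - W jb * Real.sin (2*α jb)) * Real.sin (2*β jb) = c - W jb := by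
      linear_combination hEBjb - Real.cos (2*β jb) * hPSjb - Real.sin (2*β jb) * hQSjb - W jb * pyB
    have hiv := flip_piece (P (m+1) - W jb * Real.cos (2*α jb))
      (Q (m+1) - W jb * Real.sin (2*α jb)) (c - W jb) (α jb) (β jb) (habs jb)
      (by
        have h1 := (hbnd jb).2
        have h2 := (hbnd jb).1
        linarith [Real.pi_pos])
      hI1 hI2
    obtain ⟨hv1, _⟩ := hiv
    show Q ((jb:ℕ)+1) * Real.cos (2*β jb) - P ((jb:ℕ)+1) * Real.sin (2*β jb)
      = Q ((ja:ℕ)+1) * Real.cos (2*β ja) - P ((ja:ℕ)+1) * Real.sin (2*β ja)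
    rw [hjb1, hja1]
    linear_combination hv1 + Real.cos (2*β jb) * hQSjb - Real.sin (2*β jb) * hPSjb - hg1
  have CH : ∀ (m : ℕ) (hm : m < N), tq ⟨m, hm⟩ = tq ⟨0, h0N⟩ := by
    intro m
    induction m with
    | zero => intro hm; rfl
    | succ m ih =>
      intro hm
      rw [STEP m hm]
      exact ih (by omega)
  -- interior gap relation
  have hgapint := flip_piece (P 1) (Q 1) c (β j0) (α j1)
    (hKO j0 j1 (by rw [Fin.lt_def]; exact Nat.zero_lt_one))
    (by
      have h1 := (hbnd j1).2
      have h2 := (hbnd j0).1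
      have h3 := habs j1
      have h4 := habs j0
      linarith [Real.pi_pos])
    (by exact EBc j0)
    (by exact EAc j1)
  have rel1 : tq j0 * Real.cos (α j1 - β j0) = c * Real.sin (α j1 - β j0) := hgapint.2
  -- wrap gap relation
  have hjN1 : ((jN:ℕ)+1) = N := by
    show N - 1 + 1 = N
    omega
  have hEBjN := EBc jN
  rw [hjN1] at hEBjN
  have hwrap := flip_piece (P N) (Q N) c (β jN) (α j0 + π/2)
    (by
      have h1 := (hbnd jN).2
      have h2 := (hbnd j0).1
      linarith [Real.pi_pos])
    (by
      have h1 : α j0 ≤ α jN := hmono (by rw [Fin.le_def]; exact Nat.zero_le _)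
      have h2 := habs jN
      linarith)
    hEBjN
    EW
  have rel2' : (Q N * Real.cos (2*β jN) - P N * Real.sin (2*β jN))
      * Real.cos (α j0 + π/2 - β jN) = c * Real.sin (α j0 + π/2 - β jN) := hwrap.2
  have htqjN : tq jN = Q N * Real.cos (2*β jN) - P N * Real.sin (2*β jN) := by
    rw [htq]
    simp only []
    rw [hjN1]
  have rel2 : tq j0 * Real.cos (α j0 + π/2 - β jN) = c * Real.sin (α j0 + π/2 - β jN) := by
    have hch := CH (N-1) (by omega)
    have hjNeq : (⟨N-1, by omega⟩ : Fin N) = jN := rfl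
    rw [hjNeq, ← hj0] at hch
    rw [← hch, htqjN]
    exact rel2'
  -- final contradiction
  have hL1pos : 0 < α j1 - β j0 := by
    have := hKO j0 j1 (by rw [Fin.lt_def]; exact Nat.zero_lt_one)
    linarith
  have hL1lt : α j1 - β j0 < π/4 := by
    have h1 := (hbnd j1).2
    have h2 := (hbnd j0).1
    have h3 := habs j1
    have h4 := habs j0
    linarith
  have hLwge : π/4 ≤ α j0 + π/2 - β jN := by
    have h1 := (hbnd jN).2
    have h2 := (hbnd j0).1
    linarith
  have hLwlt : α j0 + π/2 - β jN < π/2 := by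
    have h1 : α j0 ≤ α jN := hmono (by rw [Fin.le_def]; exact Nat.zero_le _)
    have h2 := habs jN
    linarith
  have hzero : c * Real.sin ((α j1 - β j0) - (α j0 + π/2 - β jN)) = 0 := by
    rw [Real.sin_sub]
    linear_combination (-Real.cos (α j0 + π/2 - β jN)) * rel1 + Real.cos (α j1 - β j0) * rel2
  have hsin0 : Real.sin ((α j1 - β j0) - (α j0 + π/2 - β jN)) = 0 := by
    rcases mul_eq_zero.mp hzero with h0 | h0
    · exact absurd h0 (ne_of_gt hcpos)
    · exact h0
  have hb1 : -π < (α j1 - β j0) - (α j0 + π/2 - β jN) := by linarith [Real.pi_pos]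
  have hb2 : (α j1 - β j0) - (α j0 + π/2 - β jN) < π := by linarith [Real.pi_pos]
  have hdiff := (Real.sin_eq_zero_iff_of_lt_of_lt hb1 hb2).mp hsin0
  linarith
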